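/- Let $\bm{a}=(\alpha_1,\ldots,\alpha_m)$ be a basis vector of $\mathbb{F}_{q^m}$ over $\mathbb{F}_q$ and $\varphi$ an $\mathbb{F}_q$-linear automorphism of $\mathbb{F}_{q^m}$. Let $A$ be the $m\times m$ matrix over $\mathbb{F}_{q^m}$ whose $i$-th row is $\varphi(\alpha_i\bm{a}) = (\varphi(\alpha_i\alpha_1),\ldots,\varphi(\alpha_i\alpha_m))$. Then $\varphi$ maps every $\mathbb{F}_{q^m}$-linear subspace of $\mathbb{F}_{q^m}^n$ (for every $n$) to an $\mathbb{F}_{q^m}$-linear subspace if and only if $A$ has rank $1$ over $\mathbb{F}_{q^m}$. -/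

import Mathlib

/-- An `𝔽_q`-linear automorphism `φ` of `𝔽_{q^m}` is *fully linear* if for every
`n`, the componentwise image of every `𝔽_{q^m}`-linear code in `𝔽_{q^m}ⁿ` is
again `𝔽_{q^m}`-linear. -/
def FullyLinear (Fq Fqm : Type) [Field Fq] [Field Fqm] [Algebra Fq Fqm]
    (φ : Fqm ≃ₗ[Fq] Fqm) : Prop :=
  ∀ (n : ℕ) (C : Submodule Fqm (Fin n → Fqm)),
    ∃ D : Submodule Fqm (Fin n → Fqm),
      (fun v : Fin n → Fqm => fun i => φ (v i)) '' (C : Set (Fin n → Fqm)) = D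

section Aux

variable {Fq Fqm : Type} [Field Fq] [Field Fqm] [Algebra Fq Fqm]

/-- From full linearity we extract the key multiplicative identity. -/
lemma key_of_fullyLinear (φ : Fqm ≃ₗ[Fq] Fqm) (h : FullyLinear Fq Fqm φ) (y x : Fqm) :
    φ (y * x) = φ y * φ (φ.symm 1 * x) := by
  set w := φ.symm 1 with hw
  obtain ⟨D, hD⟩ := h 2 (Submodule.span Fqm {![x, 1]})
  have h1 : (fun i => φ ((w • ![x, (1:Fqm)]) i)) ∈ D := by
    rw [← SetLike.mem_coe, ← hD]
    exact ⟨_, Submodule.smul_mem _ w (Submodule.mem_span_singleton_self _), rfl⟩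
  have h2 := D.smul_mem (φ y) h1
  rw [← SetLike.mem_coe, ← hD] at h2
  obtain ⟨v, hv, hveq⟩ := h2
  obtain ⟨c, rfl⟩ := Submodule.mem_span_singleton.mp hv
  have e1 := congrFun hveq 1
  have e0 := congrFun hveq 0
  simp only [Pi.smul_apply, smul_eq_mul, Matrix.cons_val_one, Matrix.head_cons,
    Matrix.cons_val_zero] at e1 e0
  have hφw : φ w = 1 := φ.apply_symm_apply 1
  rw [mul_one, mul_one, hφw, mul_one] at e1
  -- e1 : φ c = φ y
  have hc : c = y := φ.injective e1
  rw [hc] at e0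
  exact e0

/-- Rank of a nonzero outer product is 1. -/
lemma rank_outer {k : ℕ} (c r : Fin k → Fqm) (i0 : Fin k) (hc : c i0 ≠ 0) (hr : r ≠ 0) :
    (Matrix.of fun i j : Fin k => c i * r j).rank = 1 := by
  rw [Matrix.rank_eq_finrank_span_row, Matrix.row]
  have hspan : Submodule.span Fqm (Set.range (Matrix.of fun i j : Fin k => c i * r j))
      = Fqm ∙ r := by
    apply le_antisymm
    · rw [Submodule.span_le]
      rintro _ ⟨i, rfl⟩
      have : (Matrix.of fun i j : Fin k => c i * r j) i = c i • r := by
        funext j; simp [Matrix.of_apply]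
      rw [this]
      exact Submodule.smul_mem _ _ (Submodule.mem_span_singleton_self _)
    · rw [Submodule.span_le, Set.singleton_subset_iff]
      have hmem0 : (Matrix.of fun i j : Fin k => c i * r j) i0 ∈
          Set.range (Matrix.of fun i j : Fin k => c i * r j) := ⟨i0, rfl⟩
      have hmem := Submodule.smul_mem
        (Submodule.span Fqm (Set.range (Matrix.of fun i j : Fin k => c i * r j))) (c i0)⁻¹
        (Submodule.subset_span hmem0)
      have heq : (c i0)⁻¹ • ((Matrix.of fun i j : Fin k => c i * r j) i0) = r := by
        funext j
        simp [Matrix.of_apply, ← mul_assoc, inv_mul_cancel₀ hc]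
      rwa [heq] at hmem
  rw [hspan]
  exact finrank_span_singleton hr

/-- Bilinear extension from the basis. -/
lemma bilinear_ext {m : ℕ} (b : Module.Basis (Fin m) Fq Fqm) (φ : Fqm ≃ₗ[Fq] Fqm)
    (c u : Fin m → Fqm) (h : ∀ i j, φ (b i * b j) = c i * u j) (x y : Fqm) :
    φ (x * y) = (b.constr ℕ c) x * (b.constr ℕ u) y := by
  have step1 : ∀ (j : Fin m) (x : Fqm),
      φ (x * b j) = (b.constr ℕ c) x * u j := by
    intro j
    have hmaps : (φ.toLinearMap ∘ₗ LinearMap.mulRight Fq (b j))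
        = (LinearMap.mulRight Fq (u j)) ∘ₗ (b.constr ℕ c) := by
      apply b.ext
      intro i
      simp [LinearMap.mulRight_apply, Module.Basis.constr_basis, h i j]
    intro x
    exact congrFun (congrArg DFunLike.coe hmaps) x
  have hmaps : (φ.toLinearMap ∘ₗ LinearMap.mulLeft Fq x)
      = (LinearMap.mulLeft Fq ((b.constr ℕ c) x)) ∘ₗ (b.constr ℕ u) := by
    apply b.ext
    intro j
    simp [LinearMap.mulLeft_apply, Module.Basis.constr_basis, step1 j x]
  exact congrFun (congrArg DFunLike.coe hmaps) y

/-- From the factorization we get the scaling property. -/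
lemma scaling (φ : Fqm ≃ₗ[Fq] Fqm) (Cl Rl : Fqm → Fqm)
    (h : ∀ x y, φ (x * y) = Cl x * Rl y) (t : Fqm) :
    ∃ d : Fqm, ∀ x, φ (d * x) = t * φ x := by
  have hR1 : Rl 1 ≠ 0 := by
    intro h0
    have : φ (φ.symm 1 * 1) = 0 := by rw [h, h0, mul_zero]
    rw [mul_one, φ.apply_symm_apply] at this
    exact one_ne_zero this
  obtain ⟨d, hd⟩ := φ.surjective (t * (Cl 1 * Rl 1))
  refine ⟨d, fun x => ?_⟩
  have hCd : Cl d = t * Cl 1 := by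
    have h1 : Cl d * Rl 1 = (t * Cl 1) * Rl 1 := by
      rw [← h d 1, mul_one, hd]; ring
    exact mul_right_cancel₀ hR1 h1
  calc φ (d * x) = Cl d * Rl x := h d x
    _ = t * (Cl 1 * Rl x) := by rw [hCd]; ring
    _ = t * φ (1 * x) := by rw [h 1 x]
    _ = t * φ x := by rw [one_mul]

lemma fullyLinear_of_scaling (φ : Fqm ≃ₗ[Fq] Fqm)
    (hs : ∀ t : Fqm, ∃ d : Fqm, ∀ x, φ (d * x) = t * φ x) :
    FullyLinear Fq Fqm φ := by
  intro n C
  refine ⟨{ carrier := (fun v : Fin n → Fqm => fun i => φ (v i)) '' (C : Set (Fin n → Fqm)),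
            add_mem' := ?_, zero_mem' := ?_, smul_mem' := ?_ }, rfl⟩
  · rintro a b ⟨v, hv, rfl⟩ ⟨u, hu, rfl⟩
    exact ⟨v + u, C.add_mem hv hu, by funext i; simp [map_add]⟩
  · exact ⟨0, C.zero_mem, by funext i; simp⟩
  · rintro t a ⟨v, hv, rfl⟩
    obtain ⟨d, hd⟩ := hs t
    exact ⟨d • v, C.smul_mem d hv, by funext i; simp [smul_eq_mul, hd (v i)]⟩

end Aux

/-- Let `a = (α_1, …, α_m)` be a basis of `𝔽_{q^m}` over `𝔽_q`, `φ` an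
`𝔽_q`-linear automorphism of `𝔽_{q^m}`, and `A` the `m × m` matrix whose
`(i,j)` entry is `φ(α_i α_j)`.  Then `φ` is fully linear if and only if `A` has
rank `1`. -/
theorem fullyLinear_iff_rank_one
    (Fq Fqm : Type) [Field Fq] [Fintype Fq] [Field Fqm] [Algebra Fq Fqm]
    (m : ℕ) (hm : 0 < m) (b : Module.Basis (Fin m) Fq Fqm) (φ : Fqm ≃ₗ[Fq] Fqm) :
    FullyLinear Fq Fqm φ ↔
      (Matrix.of fun i j : Fin m => φ (b i * b j)).rank = 1 := by

  set i0 : Fin m := ⟨0, hm⟩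
  constructor
  · intro h
    have key := key_of_fullyLinear φ h
    have hA : (Matrix.of fun i j : Fin m => φ (b i * b j))
        = Matrix.of fun i j : Fin m => (φ (b i)) * (φ (φ.symm 1 * b j)) := by
      funext i j
      simp only [Matrix.of_apply]
      exact key (b i) (b j)
    rw [hA]
    apply rank_outer _ _ i0
    · simpa using b.ne_zero i0
    · intro h0
      have h1 := congrFun h0 i0
      simp only [Pi.zero_apply] at h1
      have hw : φ.symm 1 ≠ 0 := by
        intro hw0
        have : (1 : Fqm) = 0 := by
          have := φ.apply_symm_apply (1 : Fqm)
          rw [hw0, map_zero] at this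
          exact this.symm
        exact one_ne_zero this
      have : φ.symm 1 * b i0 ≠ 0 := mul_ne_zero hw (b.ne_zero i0)
      exact this (φ.map_eq_zero_iff.mp h1)
  · intro h
    -- extract outer product decomposition
    rw [Matrix.rank_eq_finrank_span_row, Matrix.row] at h
    obtain ⟨v, hv0, hall⟩ := finrank_eq_one_iff'.mp h
    have hrow : ∀ i : Fin m, ∃ c : Fqm, ∀ j, φ (b i * b j) = c * (v : Fin m → Fqm) j := by
      intro i
      have hmem : (Matrix.of fun i j : Fin m => φ (b i * b j)) i
          ∈ Submodule.span Fqm (Set.range (Matrix.of fun i j : Fin m => φ (b i * b j))) :=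
        Submodule.subset_span ⟨i, rfl⟩
      obtain ⟨c, hc⟩ := hall ⟨_, hmem⟩
      refine ⟨c, fun j => ?_⟩
      have := congrArg Subtype.val hc
      exact (congrFun this j).symm
    choose c hc using hrow
    have hbl := bilinear_ext b φ c (fun j => (v : Fin m → Fqm) j) (fun i j => hc i j)
    apply fullyLinear_of_scaling φ
    exact scaling φ _ _ hbl
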